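/- (Theorem 3.2, characterization of the equality condition.) Let n ≥ 1, let F : 𝒦ⁿ → [0,∞) be positively homogeneous, increasing and concave, and let p ∈ (1,∞). Then the following two assertions are equivalent: (1) for all K, L ∈ 𝒦ⁿₒ, the function F_{p;K,L}(α) = F((1-α)·_p K +_p α·_p L)^p is affine on [0,1] if and only if K and L are dilates; (2) F restricted to 𝒦ⁿₒ is strictly increasing, i.e. K, L ∈ 𝒦ⁿₒ with K ⊊ L implies F(K) < F(L). -/

import Mathlib

open scoped Pointwise RealInnerProductSpace

/-- A convex body in `ℝⁿ`: a compact convex set with nonempty interior. -/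
def IsConvexBody {n : ℕ} (K : Set (EuclideanSpace ℝ (Fin n))) : Prop :=
  IsCompact K ∧ Convex ℝ K ∧ (interior K).Nonempty

/-- A convex body containing the origin in its interior. -/
def IsConvexBodyO {n : ℕ} (K : Set (EuclideanSpace ℝ (Fin n))) : Prop :=
  IsCompact K ∧ Convex ℝ K ∧ (0 : EuclideanSpace ℝ (Fin n)) ∈ interior K

/-- The support function of a set: `h_K(u) = sup { ⟪x, u⟫ : x ∈ K }`. -/
noncomputable def supp {n : ℕ} (K : Set (EuclideanSpace ℝ (Fin n)))
    (u : EuclideanSpace ℝ (Fin n)) : ℝ :=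
  sSup ((fun x => ⟪x, u⟫) '' K)

/-- The `L_p` combination `(1-α)·_p K +_p α·_p L` of two convex bodies containing the
origin in their interiors: the convex body whose support function `h` satisfies
`h(u)^p = (1-α) h_K(u)^p + α h_L(u)^p` for all unit vectors `u`, realized as the set of
points whose inner product with every unit vector `u` is at most
`((1-α) h_K(u)^p + α h_L(u)^p)^{1/p}`. -/
noncomputable def lpComb {n : ℕ} (p α : ℝ)
    (K L : Set (EuclideanSpace ℝ (Fin n))) : Set (EuclideanSpace ℝ (Fin n)) :=
  {x | ∀ u : EuclideanSpace ℝ (Fin n), ‖u‖ = 1 →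
    ⟪x, u⟫ ≤ ((1 - α) * supp K u ^ p + α * supp L u ^ p) ^ (1 / p)}

set_option maxHeartbeats 1000000

section basics
variable {n : ℕ} {K L : Set (EuclideanSpace ℝ (Fin n))} {u : EuclideanSpace ℝ (Fin n)}

lemma bddAbove_inner_image (hK : IsCompact K) :
    BddAbove ((fun x => ⟪x, u⟫) '' K) :=
  (hK.image (continuous_id.inner continuous_const)).bddAbove

lemma le_supp (hK : IsCompact K) {x : EuclideanSpace ℝ (Fin n)} (hx : x ∈ K) :
    ⟪x, u⟫ ≤ supp K u :=
  le_csSup (bddAbove_inner_image hK) ⟨x, hx, rfl⟩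

lemma supp_le (hK : K.Nonempty) {c : ℝ} (h : ∀ x ∈ K, ⟪x, u⟫ ≤ c) :
    supp K u ≤ c :=
  csSup_le (hK.image _) (by rintro y ⟨x, hx, rfl⟩; exact h x hx)

lemma exists_supp_eq (hK : IsCompact K) (hne : K.Nonempty) :
    ∃ x ∈ K, supp K u = ⟪x, u⟫ := by
  obtain ⟨x, hx, hmax⟩ := hK.exists_isMaxOn (f := fun x => ⟪x, u⟫) hne
    ((continuous_id.inner continuous_const).continuousOn)
  exact ⟨x, hx, le_antisymm (supp_le hne hmax) (le_supp hK hx)⟩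

lemma supp_mono (hK : K.Nonempty) (hL : IsCompact L) (h : K ⊆ L) :
    supp K u ≤ supp L u :=
  supp_le hK fun x hx => le_supp hL (h hx)

lemma supp_nonneg (hK : IsCompact K) (h0 : (0:EuclideanSpace ℝ (Fin n)) ∈ K) :
    0 ≤ supp K u := by
  simpa using le_supp hK h0

lemma supp_smul (hK : IsCompact K) (hne : K.Nonempty) {c : ℝ} (hc : 0 ≤ c) :
    supp (c • K) u = c * supp K u := by
  apply le_antisymm
  · apply supp_le (hne.smul_set)
    rintro x ⟨y, hy, rfl⟩
    rw [real_inner_smul_left]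
    exact mul_le_mul_of_nonneg_left (le_supp hK hy) hc
  · obtain ⟨x, hx, hs⟩ := exists_supp_eq hK hne (u := u)
    rw [hs, ← real_inner_smul_left]
    exact le_supp (hK.smul c) (Set.smul_mem_smul_set hx)

lemma supp_add (hK : IsCompact K) (hKne : K.Nonempty) (hL : IsCompact L) (hLne : L.Nonempty) :
    supp (K + L) u = supp K u + supp L u := by
  apply le_antisymm
  · apply supp_le (hKne.add hLne)
    rintro x ⟨y, hy, z, hz, rfl⟩
    rw [inner_add_left]
    exact add_le_add (le_supp hK hy) (le_supp hL hz)
  · obtain ⟨x, hx, hs⟩ := exists_supp_eq hK hKne (u := u)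
    obtain ⟨y, hy, ht⟩ := exists_supp_eq hL hLne (u := u)
    rw [hs, ht, ← inner_add_left]
    exact le_supp (hK.add hL) (Set.add_mem_add hx hy)

lemma supp_pos (hint : (0:EuclideanSpace ℝ (Fin n)) ∈ interior K) (hK : IsCompact K)
    (hu : ‖u‖ = 1) : 0 < supp K u := by
  obtain ⟨ε, hε, hball⟩ := Metric.mem_nhds_iff.mp (mem_interior_iff_mem_nhds.mp hint)
  have hx : (ε/2) • u ∈ K := by
    apply hball
    have : ‖(ε/2) • u‖ = ε/2 := by
      rw [norm_smul, hu, mul_one, Real.norm_eq_abs, abs_of_pos (half_pos hε)]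
    simp [Metric.mem_ball, dist_zero_right, this, half_lt_self hε]
  have h1 := le_supp hK hx (u := u)
  rw [real_inner_smul_left, real_inner_self_eq_norm_sq, hu] at h1
  nlinarith

end basics

section sep
variable {n : ℕ} {K L : Set (EuclideanSpace ℝ (Fin n))} {u x : EuclideanSpace ℝ (Fin n)}

lemma supp_le' (hK : K.Nonempty) {c : ℝ} (h : ∀ x ∈ K, ⟪x, u⟫ ≤ c) :
    supp K u ≤ c :=
  csSup_le (hK.image _) (by rintro y ⟨x, hx, rfl⟩; exact h x hx)

lemma mem_of_inner_le_supp (hK : Convex ℝ K) (hKc : IsClosed K) (hne : K.Nonempty)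
    (h : ∀ u : EuclideanSpace ℝ (Fin n), ‖u‖ = 1 → ⟪x, u⟫ ≤ supp K u) :
    x ∈ K := by
  by_contra hx
  obtain ⟨f, s, hfK, hfx⟩ := geometric_hahn_banach_closed_point hK hKc hx
  set v := (InnerProductSpace.toDual ℝ (EuclideanSpace ℝ (Fin n))).symm f with hv
  have hfv : ∀ y, f y = ⟪v, y⟫ := fun y => by
    simp [hv, InnerProductSpace.toDual_symm_apply]
  have hvne : v ≠ 0 := by
    intro hv0
    obtain ⟨y0, hy0⟩ := hne
    have h1 := hfK y0 hy0
    rw [hfv y0, hv0] at h1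
    rw [hfv x, hv0] at hfx
    simp at h1 hfx
    linarith
  have hnv : 0 < ‖v‖ := norm_pos_iff.mpr hvne
  set w := ‖v‖⁻¹ • v with hw
  have hwu : ‖w‖ = 1 := by
    rw [hw, norm_smul]
    simp [abs_of_pos (inv_pos.mpr hnv), inv_mul_cancel₀ hnv.ne']
  have hsupp : supp K w ≤ ‖v‖⁻¹ * s := by
    apply supp_le' hne
    intro y hy
    have : ⟪y, w⟫ = ‖v‖⁻¹ * f y := by
      rw [hfv y, hw, real_inner_smul_right, real_inner_comm]
    rw [this]
    exact mul_le_mul_of_nonneg_left (hfK y hy).le (inv_nonneg.mpr hnv.le)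
  have hxw : ⟪x, w⟫ = ‖v‖⁻¹ * f x := by
    rw [hfv x, hw, real_inner_smul_right, real_inner_comm]
  have := h w hwu
  rw [hxw] at this
  have : ‖v‖⁻¹ * f x ≤ ‖v‖⁻¹ * s := le_trans this hsupp
  have := (mul_le_mul_iff_right₀ (inv_pos.mpr hnv)).mp this
  linarith
end sep

lemma young_strict {u v w1 w2 : ℝ} (hu : 0 < u) (hv : 0 < v) (hne : u ≠ v)
    (hw1 : 0 < w1) (hw2 : 0 < w2) (hw : w1 + w2 = 1) :
    u ^ w1 * v ^ w2 < w1 * u + w2 * v := by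
  have hlog := strictConcaveOn_log_Ioi.2 (Set.mem_Ioi.mpr hu) (Set.mem_Ioi.mpr hv)
    hne hw1 hw2 hw
  simp only [smul_eq_mul] at hlog
  have hsum : 0 < w1 * u + w2 * v := by positivity
  calc u ^ w1 * v ^ w2 = Real.exp (w1 * Real.log u + w2 * Real.log v) := by
        rw [Real.exp_add, Real.rpow_def_of_pos hu, Real.rpow_def_of_pos hv,
          mul_comm w1, mul_comm w2]
    _ < Real.exp (Real.log (w1 * u + w2 * v)) := Real.exp_lt_exp.mpr hlog
    _ = w1 * u + w2 * v := Real.exp_log hsum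

lemma rpow_right_inj {a b p : ℝ} (ha : 0 ≤ a) (hb : 0 ≤ b) (hp : 0 < p)
    (h : a ^ p = b ^ p) : a = b := by
  rcases lt_trichotomy a b with hab | hab | hab
  · exact absurd h (Real.rpow_lt_rpow ha hab hp).ne
  · exact hab
  · exact absurd h.symm (Real.rpow_lt_rpow hb hab hp).ne

/-- Two-point weighted Hölder inequality with "dual vector" built from `(A,B)`,
together with the strict version when `(x,y)` is not proportional to `(A,B)`. -/
lemma holder_aux {p : ℝ} (hp : 1 < p) {A B x y : ℝ} (hA : 0 < A) (hB : 0 < B)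
    (hx : 0 < x) (hy : 0 < y) :
    1/2 * A ^ (p-1) * x + 1/2 * B ^ (p-1) * y ≤
      ((1/2 * A ^ p + 1/2 * B ^ p) ^ (1/p)) ^ (p-1) *
        (1/2 * x ^ p + 1/2 * y ^ p) ^ (1/p) ∧
    (x * B ≠ y * A →
      1/2 * A ^ (p-1) * x + 1/2 * B ^ (p-1) * y <
      ((1/2 * A ^ p + 1/2 * B ^ p) ^ (1/p)) ^ (p-1) *
        (1/2 * x ^ p + 1/2 * y ^ p) ^ (1/p)) := by
  have hp0 : (0:ℝ) < p := by linarith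
  have hSA : (0:ℝ) < 1/2 * A ^ p + 1/2 * B ^ p := by positivity
  have hSx : (0:ℝ) < 1/2 * x ^ p + 1/2 * y ^ p := by positivity
  set m := (1/2 * A ^ p + 1/2 * B ^ p) ^ (1/p) with hm
  set N := (1/2 * x ^ p + 1/2 * y ^ p) ^ (1/p) with hN
  have hmpos : 0 < m := Real.rpow_pos_of_pos hSA _
  have hNpos : 0 < N := Real.rpow_pos_of_pos hSx _
  have hmp : m ^ p = 1/2 * A ^ p + 1/2 * B ^ p := by
    rw [hm, ← Real.rpow_mul hSA.le, one_div_mul_cancel hp0.ne', Real.rpow_one]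
  have hNp : N ^ p = 1/2 * x ^ p + 1/2 * y ^ p := by
    rw [hN, ← Real.rpow_mul hSx.le, one_div_mul_cancel hp0.ne', Real.rpow_one]
  -- normalized quantities
  set U1 := (A/m) ^ p with hU1; set U2 := (B/m) ^ p with hU2
  set V1 := (x/N) ^ p with hV1; set V2 := (y/N) ^ p with hV2
  have hU1pos : 0 < U1 := Real.rpow_pos_of_pos (by positivity) _
  have hU2pos : 0 < U2 := Real.rpow_pos_of_pos (by positivity) _
  have hV1pos : 0 < V1 := Real.rpow_pos_of_pos (by positivity) _
  have hV2pos : 0 < V2 := Real.rpow_pos_of_pos (by positivity) _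
  have hU1' : U1 = A ^ p / m ^ p := by rw [hU1, Real.div_rpow hA.le hmpos.le]
  have hU2' : U2 = B ^ p / m ^ p := by rw [hU2, Real.div_rpow hB.le hmpos.le]
  have hV1' : V1 = x ^ p / N ^ p := by rw [hV1, Real.div_rpow hx.le hNpos.le]
  have hV2' : V2 = y ^ p / N ^ p := by rw [hV2, Real.div_rpow hy.le hNpos.le]
  have hUsum : 1/2 * U1 + 1/2 * U2 = 1 := by
    rw [hU1', hU2']; field_simp [hmp]; rw [hmp]; ring
  have hVsum : 1/2 * V1 + 1/2 * V2 = 1 := by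
    rw [hV1', hV2']; field_simp [hNp]; rw [hNp]; ring
  -- weights for Young
  clear_value U1 U2 V1 V2
  have hq1 : (0:ℝ) < 1 - 1/p := by
    have : 1/p < 1 := by rw [div_lt_one hp0]; exact hp
    linarith
  have hq2 : (0:ℝ) < 1/p := by positivity
  have hqsum : (1 - 1/p) + 1/p = 1 := by ring
  -- rewriting the LHS
  have hpow1 : ∀ a : ℝ, 0 < a → (a ^ p) ^ (1 - 1/p) = a ^ (p - 1) := by
    intro a ha
    rw [← Real.rpow_mul ha.le]
    congr 1
    field_simp
  have hpow2 : ∀ a : ℝ, 0 < a → (a ^ p) ^ (1/p : ℝ) = a := by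
    intro a ha
    rw [← Real.rpow_mul ha.le, mul_one_div, div_self hp0.ne', Real.rpow_one]
  have hdivpow : ∀ a b : ℝ, 0 < a → 0 < b → (a/b) ^ (p-1) = a ^ (p-1) / b ^ (p-1) :=
    fun a b ha hb => Real.div_rpow ha.le hb.le _
  have hm1 : (0:ℝ) < m ^ (p-1) := Real.rpow_pos_of_pos hmpos _
  have hterm1 : 1/2 * (U1 ^ (1-1/p) * V1 ^ (1/p:ℝ)) * (m ^ (p-1) * N)
      = 1/2 * A ^ (p-1) * x := by
    rw [hU1, hV1, hpow1 _ (by positivity), hpow2 _ (by positivity), hdivpow _ _ hA hmpos]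
    field_simp
  have hterm2 : 1/2 * (U2 ^ (1-1/p) * V2 ^ (1/p:ℝ)) * (m ^ (p-1) * N)
      = 1/2 * B ^ (p-1) * y := by
    rw [hU2, hV2, hpow1 _ (by positivity), hpow2 _ (by positivity), hdivpow _ _ hB hmpos]
    field_simp
  have hkey' : 1/2 * A ^ (p-1) * x + 1/2 * B ^ (p-1) * y
      = (1/2 * (U1 ^ (1-1/p) * V1 ^ (1/p:ℝ)) + 1/2 * (U2 ^ (1-1/p) * V2 ^ (1/p:ℝ)))
        * (m ^ (p-1) * N) := by
    rw [add_mul, hterm1, hterm2]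
  have hmN : 0 < m ^ (p-1) * N := by
    have : (0:ℝ) < m ^ (p-1) := Real.rpow_pos_of_pos hmpos _
    positivity
  have hyoung1 : U1 ^ (1-1/p) * V1 ^ (1/p:ℝ) ≤ (1-1/p) * U1 + 1/p * V1 :=
    Real.geom_mean_le_arith_mean2_weighted hq1.le hq2.le hU1pos.le hV1pos.le hqsum
  have hyoung2 : U2 ^ (1-1/p) * V2 ^ (1/p:ℝ) ≤ (1-1/p) * U2 + 1/p * V2 :=
    Real.geom_mean_le_arith_mean2_weighted hq1.le hq2.le hU2pos.le hV2pos.le hqsum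
  set Q := m ^ (p-1) * N with hQ
  clear_value Q
  have hsum_le : ∀ t1 t2 : ℝ, t1 ≤ (1-1/p) * U1 + 1/p * V1 → t2 ≤ (1-1/p) * U2 + 1/p * V2 →
      1/2 * t1 + 1/2 * t2 ≤ 1 := by
    intro t1 t2 h1 h2
    nlinarith [hUsum, hVsum]
  constructor
  · rw [hkey']
    calc (1/2 * (U1 ^ (1-1/p) * V1 ^ (1/p:ℝ)) + 1/2 * (U2 ^ (1-1/p) * V2 ^ (1/p:ℝ))) * Q
        ≤ 1 * Q := mul_le_mul_of_nonneg_right (hsum_le _ _ hyoung1 hyoung2) hmN.le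
      _ = Q := one_mul Q
  · intro hne
    -- not both pairs equal
    have hnoteq : U1 ≠ V1 ∨ U2 ≠ V2 := by
      by_contra hcon
      push_neg at hcon
      obtain ⟨h1, h2⟩ := hcon
      have e1 : A / m = x / N := rpow_right_inj (by positivity) (by positivity) hp0 (by rw [← hU1, ← hV1]; exact h1)
      have e2 : B / m = y / N := rpow_right_inj (by positivity) (by positivity) hp0 (by rw [← hU2, ← hV2]; exact h2)
      apply hne
      have ex : x = A * N / m := by field_simp at e1 ⊢; linarith [e1]
      have ey : y = B * N / m := by field_simp at e2 ⊢; linarith [e2]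
      rw [ex, ey]; ring
    have hstrict : 1/2 * (U1 ^ (1-1/p) * V1 ^ (1/p:ℝ)) + 1/2 * (U2 ^ (1-1/p) * V2 ^ (1/p:ℝ))
        < 1 := by
      rcases hnoteq with h | h
      · have s1 := young_strict hU1pos hV1pos h hq1 hq2 hqsum
        nlinarith [hyoung2, hUsum, hVsum]
      · have s2 := young_strict hU2pos hV2pos h hq1 hq2 hqsum
        nlinarith [hyoung1, hUsum, hVsum]
    rw [hkey']
    calc (1/2 * (U1 ^ (1-1/p) * V1 ^ (1/p:ℝ)) + 1/2 * (U2 ^ (1-1/p) * V2 ^ (1/p:ℝ))) * Q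
        < 1 * Q := mul_lt_mul_of_pos_right hstrict hmN
      _ = Q := one_mul Q

section bodies
variable {n : ℕ} {K L : Set (EuclideanSpace ℝ (Fin n))} {u : EuclideanSpace ℝ (Fin n)}

lemma IsConvexBodyO.body (h : IsConvexBodyO K) : IsConvexBody K :=
  ⟨h.1, h.2.1, ⟨0, h.2.2⟩⟩

lemma IsConvexBodyO.zero_mem (h : IsConvexBodyO K) : (0:EuclideanSpace ℝ (Fin n)) ∈ K :=
  interior_subset h.2.2

lemma IsConvexBodyO.nonempty (h : IsConvexBodyO K) : K.Nonempty := ⟨0, h.zero_mem⟩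

lemma IsConvexBodyO.smul (h : IsConvexBodyO K) {c : ℝ} (hc : 0 < c) :
    IsConvexBodyO (c • K) := by
  refine ⟨h.1.smul c, h.2.1.smul c, ?_⟩
  rw [interior_smul₀ hc.ne' K]
  exact ⟨0, h.2.2, smul_zero c⟩

lemma IsConvexBodyO.add (hK : IsConvexBodyO K) (hL : IsConvexBodyO L) :
    IsConvexBodyO (K + L) := by
  refine ⟨hK.1.add hL.1, hK.2.1.add hL.2.1, ?_⟩
  have hsub : K ⊆ K + L := fun x hx => ⟨x, hx, 0, hL.zero_mem, (add_zero x)⟩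
  exact interior_mono hsub hK.2.2

end bodies

section lp
variable {n : ℕ} {K L : Set (EuclideanSpace ℝ (Fin n))} {u : EuclideanSpace ℝ (Fin n)}
  {p α : ℝ}

lemma exists_supp_upper (hK : IsCompact K) :
    ∃ R : ℝ, 0 < R ∧ ∀ u : EuclideanSpace ℝ (Fin n), ‖u‖ = 1 → supp K u ≤ R := by
  obtain ⟨R, hR⟩ := hK.isBounded.subset_closedBall 0
  refine ⟨max R 1, lt_of_lt_of_le one_pos (le_max_right _ _), fun u hu => ?_⟩
  rcases K.eq_empty_or_nonempty with h | h
  · rw [supp, h, Set.image_empty, Real.sSup_empty]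
    positivity
  apply supp_le h
  intro x hx
  calc ⟪x, u⟫ ≤ ‖x‖ * ‖u‖ := real_inner_le_norm x u
    _ = ‖x‖ := by rw [hu, mul_one]
    _ ≤ R := by simpa using hR hx
    _ ≤ max R 1 := le_max_left _ _

lemma exists_supp_lower (hK : IsConvexBodyO K) :
    ∃ r : ℝ, 0 < r ∧ ∀ u : EuclideanSpace ℝ (Fin n), ‖u‖ = 1 → r ≤ supp K u := by
  obtain ⟨ε, hε, hball⟩ := Metric.mem_nhds_iff.mp (mem_interior_iff_mem_nhds.mp hK.2.2)
  refine ⟨ε/2, half_pos hε, fun u hu => ?_⟩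
  have hx : (ε/2) • u ∈ K := by
    apply hball
    have : ‖(ε/2) • u‖ = ε/2 := by
      rw [norm_smul, hu, mul_one, Real.norm_eq_abs, abs_of_pos (half_pos hε)]
    simp [Metric.mem_ball, dist_zero_right, this, half_lt_self hε]
  have h1 := le_supp hK.1 hx (u := u)
  rw [real_inner_smul_left, real_inner_self_eq_norm_sq, hu] at h1
  nlinarith

/-- The `g` function bounding `lpComb`. -/
lemma lpComb_isConvexBodyO (hp : 1 < p) (hα : α ∈ Set.Icc (0:ℝ) 1)
    (hK : IsConvexBodyO K) (hL : IsConvexBodyO L) :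
    IsConvexBodyO (lpComb p α K L) := by
  have hp0 : (0:ℝ) < p := by linarith
  obtain ⟨hα0, hα1⟩ := hα
  set g : EuclideanSpace ℝ (Fin n) → ℝ :=
    fun u => ((1 - α) * supp K u ^ p + α * supp L u ^ p) ^ (1/p) with hg
  have hKnn : ∀ u : EuclideanSpace ℝ (Fin n), 0 ≤ supp K u :=
    fun u => supp_nonneg hK.1 hK.zero_mem
  have hLnn : ∀ u : EuclideanSpace ℝ (Fin n), 0 ≤ supp L u :=
    fun u => supp_nonneg hL.1 hL.zero_mem
  have hsum_nn : ∀ u : EuclideanSpace ℝ (Fin n),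
      0 ≤ (1 - α) * supp K u ^ p + α * supp L u ^ p := by
    intro u
    have := Real.rpow_nonneg (hKnn u) p
    have := Real.rpow_nonneg (hLnn u) p
    nlinarith
  -- upper bound
  obtain ⟨RK, hRK, hRKle⟩ := exists_supp_upper (K := K) hK.1
  obtain ⟨RL, hRL, hRLle⟩ := exists_supp_upper (K := L) hL.1
  set R := max RK RL with hR
  have hRpos : 0 < R := lt_of_lt_of_le hRK (le_max_left _ _)
  have hgR : ∀ u : EuclideanSpace ℝ (Fin n), ‖u‖ = 1 → g u ≤ R := by
    intro u hu
    have h1 : supp K u ^ p ≤ R ^ p :=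
      Real.rpow_le_rpow (hKnn u) (le_trans (hRKle u hu) (le_max_left _ _)) hp0.le
    have h2 : supp L u ^ p ≤ R ^ p :=
      Real.rpow_le_rpow (hLnn u) (le_trans (hRLle u hu) (le_max_right _ _)) hp0.le
    have hsum : (1 - α) * supp K u ^ p + α * supp L u ^ p ≤ R ^ p := by nlinarith
    calc g u ≤ (R ^ p) ^ (1/p) := Real.rpow_le_rpow (hsum_nn u) hsum (by positivity)
      _ = R := by rw [← Real.rpow_mul hRpos.le, mul_one_div, div_self hp0.ne', Real.rpow_one]
  -- lower bound
  obtain ⟨rK, hrK, hrKle⟩ := exists_supp_lower hK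
  obtain ⟨rL, hrL, hrLle⟩ := exists_supp_lower hL
  set r := min rK rL with hr
  have hrpos : 0 < r := lt_min hrK hrL
  have hgr : ∀ u : EuclideanSpace ℝ (Fin n), ‖u‖ = 1 → r ≤ g u := by
    intro u hu
    have h1 : r ^ p ≤ supp K u ^ p :=
      Real.rpow_le_rpow hrpos.le (le_trans (min_le_left _ _) (hrKle u hu)) hp0.le
    have h2 : r ^ p ≤ supp L u ^ p :=
      Real.rpow_le_rpow hrpos.le (le_trans (min_le_right _ _) (hrLle u hu)) hp0.le
    have hsum : r ^ p ≤ (1 - α) * supp K u ^ p + α * supp L u ^ p := by nlinarith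
    calc r = (r ^ p) ^ (1/p) := by
          rw [← Real.rpow_mul hrpos.le, mul_one_div, div_self hp0.ne', Real.rpow_one]
      _ ≤ g u := Real.rpow_le_rpow (by positivity) hsum (by positivity)
  -- rewrite as intersection
  have hrepr : lpComb p α K L =
      ⋂ (u : EuclideanSpace ℝ (Fin n)), ⋂ (_ : ‖u‖ = 1),
        {x : EuclideanSpace ℝ (Fin n) | ⟪x, u⟫ ≤ g u} := by
    ext x
    simp only [lpComb, Set.mem_setOf_eq, Set.mem_iInter, hg]
  have hclosed : IsClosed (lpComb p α K L) := by
    rw [hrepr]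
    exact isClosed_iInter fun u => isClosed_iInter fun _ =>
      isClosed_le (continuous_id.inner continuous_const) continuous_const
  have hconv : Convex ℝ (lpComb p α K L) := by
    rw [hrepr]
    exact convex_iInter fun u => convex_iInter fun _ =>
      convex_halfSpace_le ⟨fun a b => inner_add_left a b u,
        fun c a => real_inner_smul_left a u c⟩ _
  have hbdd : lpComb p α K L ⊆ Metric.closedBall 0 R := by
    intro x hx
    rcases eq_or_ne x 0 with rfl | hx0
    · simp [hRpos.le]
    have hnx : 0 < ‖x‖ := norm_pos_iff.mpr hx0
    have hu1 : ‖(‖x‖⁻¹ • x : EuclideanSpace ℝ (Fin n))‖ = 1 := by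
      rw [norm_smul, Real.norm_eq_abs, abs_of_pos (inv_pos.mpr hnx), inv_mul_cancel₀ hnx.ne']
    have hinner : ⟪x, (‖x‖⁻¹ • x : EuclideanSpace ℝ (Fin n))⟫ = ‖x‖ := by
      rw [real_inner_smul_right, real_inner_self_eq_norm_sq]
      field_simp
    have := hx _ hu1
    rw [hinner] at this
    have : ‖x‖ ≤ R := le_trans this (hgR _ hu1)
    simpa [Metric.mem_closedBall, dist_zero_right] using this
  have hcompact : IsCompact (lpComb p α K L) :=
    (Metric.isCompact_of_isClosed_isBounded hclosed
      (Metric.isBounded_closedBall.subset hbdd))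
  have hint : (0:EuclideanSpace ℝ (Fin n)) ∈ interior (lpComb p α K L) := by
    have hball : Metric.ball (0:EuclideanSpace ℝ (Fin n)) r ⊆ lpComb p α K L := by
      intro x hxball
      intro u hu
      have hnx : ‖x‖ < r := by simpa [Metric.mem_ball, dist_zero_right] using hxball
      calc ⟪x, u⟫ ≤ ‖x‖ * ‖u‖ := real_inner_le_norm x u
        _ = ‖x‖ := by rw [hu, mul_one]
        _ ≤ g u := le_trans hnx.le (hgr u hu)
    exact interior_maximal hball Metric.isOpen_ball (Metric.mem_ball_self hrpos)
  exact ⟨hcompact, hconv, hint⟩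

end lp

section more
variable {n : ℕ} {K L : Set (EuclideanSpace ℝ (Fin n))} {u : EuclideanSpace ℝ (Fin n)}
  {p α : ℝ}

lemma rpow_pow_inv {a : ℝ} (ha : 0 ≤ a) (hp0 : p ≠ 0) : (a ^ p) ^ (1/p) = a := by
  rw [← Real.rpow_mul ha, mul_one_div, div_self hp0, Real.rpow_one]

lemma eq_of_supp_eq (hK : IsCompact K) (hKc : Convex ℝ K) (hKne : K.Nonempty)
    (hL : IsCompact L) (hLc : Convex ℝ L) (hLne : L.Nonempty)
    (h : ∀ u : EuclideanSpace ℝ (Fin n), ‖u‖ = 1 → supp K u = supp L u) : K = L := by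
  apply Set.Subset.antisymm
  · intro x hx
    exact mem_of_inner_le_supp hLc hL.isClosed hLne
      (fun u hu => (h u hu) ▸ le_supp hK hx)
  · intro x hx
    exact mem_of_inner_le_supp hKc hK.isClosed hKne
      (fun u hu => (h u hu) ▸ le_supp hL hx)

lemma lpComb_zero (hp : 1 < p) (hK : IsConvexBodyO K) (hL : IsConvexBodyO L) :
    lpComb p 0 K L = K := by
  have hp0 : p ≠ 0 := by positivity
  have hbound : ∀ u : EuclideanSpace ℝ (Fin n),
      ((1 - (0:ℝ)) * supp K u ^ p + 0 * supp L u ^ p) ^ (1/p) = supp K u := by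
    intro u
    have : (1 - (0:ℝ)) * supp K u ^ p + 0 * supp L u ^ p = supp K u ^ p := by ring
    rw [this, rpow_pow_inv (supp_nonneg hK.1 hK.zero_mem) hp0]
  ext x
  constructor
  · intro hx
    exact mem_of_inner_le_supp hK.2.1 hK.1.isClosed hK.nonempty
      (fun u hu => (hbound u) ▸ hx u hu)
  · intro hx u hu
    rw [hbound u]
    exact le_supp hK.1 hx

lemma lpComb_one (hp : 1 < p) (hK : IsConvexBodyO K) (hL : IsConvexBodyO L) :
    lpComb p 1 K L = L := by
  have hp0 : p ≠ 0 := by positivity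
  have hbound : ∀ u : EuclideanSpace ℝ (Fin n),
      ((1 - (1:ℝ)) * supp K u ^ p + 1 * supp L u ^ p) ^ (1/p) = supp L u := by
    intro u
    have : (1 - (1:ℝ)) * supp K u ^ p + 1 * supp L u ^ p = supp L u ^ p := by ring
    rw [this, rpow_pow_inv (supp_nonneg hL.1 hL.zero_mem) hp0]
  ext x
  constructor
  · intro hx
    exact mem_of_inner_le_supp hL.2.1 hL.1.isClosed hL.nonempty
      (fun u hu => (hbound u) ▸ hx u hu)
  · intro hx u hu
    rw [hbound u]
    exact le_supp hL.1 hx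

/-- If `K ⊆ L` then `K ⊆ lpComb p α K L ⊆ L`. -/
lemma lpComb_sandwich (hp : 1 < p) (hK : IsConvexBodyO K) (hL : IsConvexBodyO L)
    (hsub : K ⊆ L) (hα : α ∈ Set.Icc (0:ℝ) 1) :
    K ⊆ lpComb p α K L ∧ lpComb p α K L ⊆ L := by
  have hp0 : (0:ℝ) < p := by linarith
  have hKnn : ∀ v : EuclideanSpace ℝ (Fin n), 0 ≤ supp K v :=
    fun v => supp_nonneg hK.1 hK.zero_mem
  have hLnn : ∀ v : EuclideanSpace ℝ (Fin n), 0 ≤ supp L v :=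
    fun v => supp_nonneg hL.1 hL.zero_mem
  have hmono : ∀ v : EuclideanSpace ℝ (Fin n), supp K v ≤ supp L v :=
    fun v => supp_mono hK.nonempty hL.1 hsub
  have hpow : ∀ v : EuclideanSpace ℝ (Fin n), supp K v ^ p ≤ supp L v ^ p :=
    fun v => Real.rpow_le_rpow (hKnn v) (hmono v) hp0.le
  constructor
  · intro x hx u hu
    have h1 : supp K u ^ p ≤ (1 - α) * supp K u ^ p + α * supp L u ^ p := by
      nlinarith [hpow u, hα.1, hα.2]
    calc ⟪x, u⟫ ≤ supp K u := le_supp hK.1 hx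
      _ = (supp K u ^ p) ^ (1/p) := (rpow_pow_inv (hKnn u) hp0.ne').symm
      _ ≤ ((1 - α) * supp K u ^ p + α * supp L u ^ p) ^ (1/p) :=
          Real.rpow_le_rpow (Real.rpow_nonneg (hKnn u) p) h1 (by positivity)
  · intro x hx
    apply mem_of_inner_le_supp hL.2.1 hL.1.isClosed hL.nonempty
    intro u hu
    have h1 : (1 - α) * supp K u ^ p + α * supp L u ^ p ≤ supp L u ^ p := by
      nlinarith [hpow u, hα.1, hα.2]
    calc ⟪x, u⟫ ≤ ((1 - α) * supp K u ^ p + α * supp L u ^ p) ^ (1/p) := hx u hu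
      _ ≤ (supp L u ^ p) ^ (1/p) := by
          apply Real.rpow_le_rpow _ h1 (by positivity)
          nlinarith [hpow u, Real.rpow_nonneg (hKnn u) p, hα.1, hα.2]
      _ = supp L u := rpow_pow_inv (hLnn u) hp0.ne'

end more

section Fside
variable {n : ℕ} {K L : Set (EuclideanSpace ℝ (Fin n))}
  {F : Set (EuclideanSpace ℝ (Fin n)) → ℝ} {p : ℝ}

lemma F_concave_comb
    (hFhom : ∀ c : ℝ, 0 < c → ∀ K, IsConvexBody K → F (c • K) = c * F K)
    (hFconc : ∀ K L, IsConvexBody K → IsConvexBody L → ∀ α : ℝ, α ∈ Set.Ioo (0:ℝ) 1 →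
      (1 - α) * F K + α * F L ≤ F ((1 - α) • K + α • L))
    (hK : IsConvexBodyO K) (hL : IsConvexBodyO L) {s t : ℝ} (hs : 0 < s) (ht : 0 < t) :
    s * F K + t * F L ≤ F (s • K + t • L) := by
  have hst : 0 < s + t := by linarith
  set α := t / (s + t) with hα
  have hα0 : 0 < α := by positivity
  have hα1 : α < 1 := by rw [hα, div_lt_one hst]; linarith
  have h1α : 1 - α = s / (s + t) := by rw [hα]; field_simp; ring
  have e1 : (s + t) * (s/(s+t)) = s := by field_simp
  have e2 : (s + t) * (t/(s+t)) = t := by field_simp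
  have hset : s • K + t • L = (s + t) • ((1 - α) • K + α • L) := by
    rw [smul_add, smul_smul, smul_smul, h1α, hα, e1, e2]
  have hcomb : IsConvexBodyO ((1 - α) • K + α • L) :=
    (hK.smul (by rw [h1α]; positivity)).add (hL.smul hα0)
  have := hFconc K L hK.body hL.body α ⟨hα0, hα1⟩
  calc s * F K + t * F L = (s + t) * ((1 - α) * F K + α * F L) := by
        rw [h1α, hα]; field_simp
    _ ≤ (s + t) * F ((1 - α) • K + α • L) := by nlinarith
    _ = F ((s + t) • ((1 - α) • K + α • L)) := (hFhom _ hst _ hcomb.body).symm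
    _ = F (s • K + t • L) := by rw [← hset]

lemma F_pos (hn : 1 ≤ n)
    (hFhom : ∀ c : ℝ, 0 < c → ∀ K, IsConvexBody K → F (c • K) = c * F K)
    (hS : ∀ K L, IsConvexBodyO K → IsConvexBodyO L → K ⊂ L → F K < F L)
    (hK : IsConvexBodyO K) : 0 < F K := by
  have hhalf : IsConvexBodyO ((1/2 : ℝ) • K) := hK.smul (by norm_num)
  have hsub : (1/2 : ℝ) • K ⊆ K := by
    rintro x ⟨y, hy, rfl⟩
    have := hK.2.1 hy hK.zero_mem (by norm_num : (0:ℝ) ≤ 1/2) (by norm_num : (0:ℝ) ≤ 1/2)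
      (by norm_num)
    simpa using this
  -- a point of positive norm in K
  obtain ⟨ε, hε, hball⟩ := Metric.mem_nhds_iff.mp (mem_interior_iff_mem_nhds.mp hK.2.2)
  set e : EuclideanSpace ℝ (Fin n) := EuclideanSpace.single ⟨0, hn⟩ 1 with he
  have hene : ‖e‖ = 1 := by rw [he, EuclideanSpace.norm_single, norm_one]
  have hxe : (ε/2) • e ∈ K := by
    apply hball
    have : ‖(ε/2) • e‖ = ε/2 := by
      rw [norm_smul, hene, mul_one, Real.norm_eq_abs, abs_of_pos (half_pos hε)]
    simp [Metric.mem_ball, dist_zero_right, this, half_lt_self hε]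
  obtain ⟨z, hz, hzmax⟩ := hK.1.exists_isMaxOn (f := fun x => ‖x‖) hK.nonempty
    continuous_norm.continuousOn
  have hznorm : ε/2 ≤ ‖z‖ := by
    have h := hzmax hxe
    simp only [Set.mem_setOf_eq, norm_smul, hene, mul_one, Real.norm_eq_abs,
      abs_of_pos (half_pos hε)] at h
    exact h
  have hzpos : 0 < ‖z‖ := lt_of_lt_of_le (half_pos hε) hznorm
  have hproper : z ∉ (1/2 : ℝ) • K := by
    rintro ⟨y, hy, hzy⟩
    have h2 : ‖y‖ ≤ ‖z‖ := hzmax hy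
    have : ‖z‖ = (1/2) * ‖y‖ := by
      rw [← hzy, norm_smul]; norm_num
    linarith
  have hss : (1/2 : ℝ) • K ⊂ K := ⟨hsub, fun h => hproper (h hz)⟩
  have hlt := hS _ _ hhalf hK hss
  rw [hFhom (1/2) (by norm_num) K hK.body] at hlt
  linarith

end Fside

section dilate
variable {n : ℕ} {L : Set (EuclideanSpace ℝ (Fin n))} {p α c : ℝ}

lemma dilate_base_pos (hc : 0 < c) (hα : α ∈ Set.Icc (0:ℝ) 1) {p : ℝ} (hp : 1 < p) :
    0 < (1 - α) * c ^ p + α := by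
  have hcp : 0 < c ^ p := Real.rpow_pos_of_pos hc p
  rcases eq_or_lt_of_le hα.2 with h | h
  · rw [h]; norm_num
  · have : 0 < (1 - α) * c ^ p := by nlinarith [hα.1]
    nlinarith [hα.1]

lemma lpComb_dilate (hp : 1 < p) (hL : IsConvexBodyO L) (hc : 0 < c)
    (hα : α ∈ Set.Icc (0:ℝ) 1) :
    lpComb p α (c • L) L = (((1 - α) * c ^ p + α) ^ (1/p)) • L := by
  have hp0 : (0:ℝ) < p := by linarith
  have hbase : 0 < (1 - α) * c ^ p + α := dilate_base_pos hc hα hp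
  set cα := ((1 - α) * c ^ p + α) ^ (1/p) with hcα
  have hcαpos : 0 < cα := Real.rpow_pos_of_pos hbase _
  have hLnn : ∀ v : EuclideanSpace ℝ (Fin n), 0 ≤ supp L v :=
    fun v => supp_nonneg hL.1 hL.zero_mem
  have hg : ∀ u : EuclideanSpace ℝ (Fin n),
      ((1 - α) * supp (c • L) u ^ p + α * supp L u ^ p) ^ (1/p) = cα * supp L u := by
    intro u
    rw [supp_smul hL.1 hL.nonempty hc.le, Real.mul_rpow hc.le (hLnn u)]
    have : (1 - α) * (c ^ p * supp L u ^ p) + α * supp L u ^ p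
        = ((1 - α) * c ^ p + α) * supp L u ^ p := by ring
    rw [this, Real.mul_rpow hbase.le (Real.rpow_nonneg (hLnn u) p),
      rpow_pow_inv (hLnn u) hp0.ne', hcα]
  have hsuppcα : ∀ u : EuclideanSpace ℝ (Fin n), supp (cα • L) u = cα * supp L u :=
    fun u => supp_smul hL.1 hL.nonempty hcαpos.le
  ext x
  constructor
  · intro hx
    apply mem_of_inner_le_supp (hL.2.1.smul cα) ((hL.1.smul cα).isClosed)
      (hL.nonempty.smul_set)
    intro u hu
    rw [hsuppcα u, ← hg u]
    exact hx u hu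
  · intro hx u hu
    rw [hg u, ← hsuppcα u]
    exact le_supp (hL.1.smul cα) hx

end dilate

section main
variable {n : ℕ}

/-- Core: under strict monotonicity, affineness at `α = 1/2` forces dilates. -/
lemma affine_imp_dilate
    (F : Set (EuclideanSpace ℝ (Fin n)) → ℝ) (hn : 1 ≤ n)
    (hF0 : ∀ K, IsConvexBody K → 0 ≤ F K)
    (hFhom : ∀ c : ℝ, 0 < c → ∀ K, IsConvexBody K → F (c • K) = c * F K)
    (hFmono : ∀ K L, IsConvexBody K → IsConvexBody L → K ⊆ L → F K ≤ F L)
    (hFconc : ∀ K L, IsConvexBody K → IsConvexBody L → ∀ α : ℝ, α ∈ Set.Ioo (0:ℝ) 1 →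
      (1 - α) * F K + α * F L ≤ F ((1 - α) • K + α • L))
    (hS : ∀ K L, IsConvexBodyO K → IsConvexBodyO L → K ⊂ L → F K < F L)
    {p : ℝ} (hp : 1 < p) {K L : Set (EuclideanSpace ℝ (Fin n))}
    (hK : IsConvexBodyO K) (hL : IsConvexBodyO L)
    (Haff : F (lpComb p (1/2) K L) ^ p =
      (1 - 1/2) * F (lpComb p 0 K L) ^ p + 1/2 * F (lpComb p 1 K L) ^ p) :
    ∃ c : ℝ, 0 < c ∧ K = c • L := by
  have hp0 : (0:ℝ) < p := by linarith
  have h12 : (1:ℝ) - 1/2 = 1/2 := by norm_num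
  rw [lpComb_zero hp hK hL, lpComb_one hp hK hL, h12] at Haff
  set a := F K with hadef
  set b := F L with hbdef
  have ha : 0 < a := F_pos hn hFhom hS hK
  have hb : 0 < b := F_pos hn hFhom hS hL
  have hKu : ∀ u : EuclideanSpace ℝ (Fin n), ‖u‖ = 1 → 0 < supp K u :=
    fun u hu => supp_pos hK.2.2 hK.1 hu
  have hLu : ∀ u : EuclideanSpace ℝ (Fin n), ‖u‖ = 1 → 0 < supp L u :=
    fun u hu => supp_pos hL.2.2 hL.1 hu
  set M := lpComb p (1/2) K L with hMdef
  have hMbody : IsConvexBodyO M :=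
    lpComb_isConvexBodyO hp ⟨by norm_num, by norm_num⟩ hK hL
  set m := (1/2 * a ^ p + 1/2 * b ^ p) ^ (1/p) with hmdef
  have hSA : (0:ℝ) < 1/2 * a ^ p + 1/2 * b ^ p := by
    have := Real.rpow_pos_of_pos ha p
    have := Real.rpow_pos_of_pos hb p
    nlinarith
  have hmpos : 0 < m := Real.rpow_pos_of_pos hSA _
  have hmp : m ^ p = 1/2 * a ^ p + 1/2 * b ^ p := by
    rw [hmdef, ← Real.rpow_mul hSA.le, one_div_mul_cancel hp0.ne', Real.rpow_one]
  have hFM : F M = m := by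
    apply rpow_right_inj (hF0 M hMbody.body) hmpos.le hp0
    rw [Haff, hmp]
  have hm1 : (0:ℝ) < m ^ (p-1) := Real.rpow_pos_of_pos hmpos _
  set s := 1/2 * a ^ (p-1) / m ^ (p-1) with hsdef
  set t := 1/2 * b ^ (p-1) / m ^ (p-1) with htdef
  have hs : 0 < s := by
    rw [hsdef]; have := Real.rpow_pos_of_pos ha (p-1); positivity
  have ht : 0 < t := by
    rw [htdef]; have := Real.rpow_pos_of_pos hb (p-1); positivity
  set N := s • K + t • L with hNdef
  have hNbody : IsConvexBodyO N := (hK.smul hs).add (hL.smul ht)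
  -- inclusion N ⊆ M
  have hdiv : ∀ x y : ℝ, 0 < x → 0 < y →
      s * x + t * y = (1/2 * a ^ (p-1) * x + 1/2 * b ^ (p-1) * y) / m ^ (p-1) := by
    intro x y hx hy
    rw [hsdef, htdef]; ring
  have hbound : ∀ u : EuclideanSpace ℝ (Fin n), ‖u‖ = 1 →
      s * supp K u + t * supp L u ≤
        (1/2 * supp K u ^ p + 1/2 * supp L u ^ p) ^ (1/p) := by
    intro u hu
    have hhold := (holder_aux hp ha hb (hKu u hu) (hLu u hu)).1
    rw [hdiv _ _ (hKu u hu) (hLu u hu), div_le_iff₀ hm1]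
    calc 1/2 * a ^ (p-1) * supp K u + 1/2 * b ^ (p-1) * supp L u
        ≤ m ^ (p-1) * (1/2 * supp K u ^ p + 1/2 * supp L u ^ p) ^ (1/p) := by
          rw [hmdef] at *; exact hhold
      _ = (1/2 * supp K u ^ p + 1/2 * supp L u ^ p) ^ (1/p) * m ^ (p-1) := mul_comm _ _
  have hsub : N ⊆ M := by
    intro x hx
    obtain ⟨x1, hx1, y1, hy1, rfl⟩ := Set.mem_add.mp hx
    obtain ⟨xk, hxk, rfl⟩ := hx1
    obtain ⟨yl, hyl, rfl⟩ := hy1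
    intro u hu
    rw [h12]
    have hinner : ⟪s • xk + t • yl, u⟫ = s * ⟪xk, u⟫ + t * ⟪yl, u⟫ := by
      rw [inner_add_left, real_inner_smul_left, real_inner_smul_left]
    rw [hinner]
    calc s * ⟪xk, u⟫ + t * ⟪yl, u⟫ ≤ s * supp K u + t * supp L u :=
          add_le_add (mul_le_mul_of_nonneg_left (le_supp hK.1 hxk) hs.le)
            (mul_le_mul_of_nonneg_left (le_supp hL.1 hyl) ht.le)
      _ ≤ (1/2 * supp K u ^ p + 1/2 * supp L u ^ p) ^ (1/p) := hbound u hu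
  -- the chain of equalities
  have ea : a ^ (p-1) * a = a ^ p := by
    rw [← Real.rpow_add_one ha.ne' (p-1), sub_add_cancel]
  have eb : b ^ (p-1) * b = b ^ p := by
    rw [← Real.rpow_add_one hb.ne' (p-1), sub_add_cancel]
  have hst : s * a + t * b = m := by
    calc s * a + t * b = (1/2 * (a ^ (p-1) * a) + 1/2 * (b ^ (p-1) * b)) / m ^ (p-1) := by
          rw [hsdef, htdef]; ring
      _ = m ^ p / m ^ (p-1) := by rw [ea, eb, hmp]
      _ = m := by rw [← Real.rpow_sub hmpos, sub_sub_cancel, Real.rpow_one]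
  have hFNge : s * a + t * b ≤ F N := F_concave_comb hFhom hFconc hK hL hs ht
  have hFNle : F N ≤ F M := hFmono N M hNbody.body hMbody.body hsub
  have hFN : F N = F M := le_antisymm hFNle (by rw [hFM, ← hst]; exact hFNge)
  have hNM : N = M := by
    by_contra hne
    exact absurd (hS N M hNbody hMbody (ssubset_iff_subset_ne.mpr ⟨hsub, hne⟩)) (by
      rw [hFN]; exact lt_irrefl _)
  -- pointwise proportionality of support functions
  have hprop : ∀ u : EuclideanSpace ℝ (Fin n), ‖u‖ = 1 →
      supp K u * b = supp L u * a := by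
    intro u hu
    by_contra hne
    obtain ⟨xK, hxK, hxKe⟩ := exists_supp_eq hK.1 hK.nonempty (u := u)
    obtain ⟨xL, hxL, hxLe⟩ := exists_supp_eq hL.1 hL.nonempty (u := u)
    set gu := (1/2 * supp K u ^ p + 1/2 * supp L u ^ p) ^ (1/p) with hgudef
    have hSu : (0:ℝ) < 1/2 * supp K u ^ p + 1/2 * supp L u ^ p := by
      have := Real.rpow_pos_of_pos (hKu u hu) p
      have := Real.rpow_pos_of_pos (hLu u hu) p
      nlinarith
    have hgupos : 0 < gu := Real.rpow_pos_of_pos hSu _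
    have hgup : gu ^ p = 1/2 * supp K u ^ p + 1/2 * supp L u ^ p := by
      rw [hgudef, ← Real.rpow_mul hSu.le, one_div_mul_cancel hp0.ne', Real.rpow_one]
    have hgu1 : (0:ℝ) < gu ^ (p-1) := Real.rpow_pos_of_pos hgupos _
    set s' := 1/2 * supp K u ^ (p-1) / gu ^ (p-1) with hs'def
    set t' := 1/2 * supp L u ^ (p-1) / gu ^ (p-1) with ht'def
    have hs' : 0 < s' := by
      rw [hs'def]; have := Real.rpow_pos_of_pos (hKu u hu) (p-1); positivity
    have ht' : 0 < t' := by
      rw [ht'def]; have := Real.rpow_pos_of_pos (hLu u hu) (p-1); positivity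
    set z := s' • xK + t' • xL with hzdef
    have hzM : z ∈ M := by
      intro v hv
      rw [h12]
      have hinner : ⟪z, v⟫ = s' * ⟪xK, v⟫ + t' * ⟪xL, v⟫ := by
        rw [hzdef, inner_add_left, real_inner_smul_left, real_inner_smul_left]
      have hhold := (holder_aux hp (hKu u hu) (hLu u hu) (hKu v hv) (hLu v hv)).1
      rw [hinner]
      calc s' * ⟪xK, v⟫ + t' * ⟪xL, v⟫ ≤ s' * supp K v + t' * supp L v :=
            add_le_add (mul_le_mul_of_nonneg_left (le_supp hK.1 hxK) hs'.le)
              (mul_le_mul_of_nonneg_left (le_supp hL.1 hxL) ht'.le)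
        _ ≤ (1/2 * supp K v ^ p + 1/2 * supp L v ^ p) ^ (1/p) := by
            have : s' * supp K v + t' * supp L v =
                (1/2 * supp K u ^ (p-1) * supp K v + 1/2 * supp L u ^ (p-1) * supp L v)
                  / gu ^ (p-1) := by rw [hs'def, ht'def]; ring
            rw [this, div_le_iff₀ hgu1]
            calc 1/2 * supp K u ^ (p-1) * supp K v + 1/2 * supp L u ^ (p-1) * supp L v
                ≤ gu ^ (p-1) * (1/2 * supp K v ^ p + 1/2 * supp L v ^ p) ^ (1/p) := by
                  rw [hgudef] at *; exact hhold
              _ = (1/2 * supp K v ^ p + 1/2 * supp L v ^ p) ^ (1/p) * gu ^ (p-1) :=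
                  mul_comm _ _
    have eK : supp K u ^ (p-1) * supp K u = supp K u ^ p := by
      rw [← Real.rpow_add_one (hKu u hu).ne' (p-1), sub_add_cancel]
    have eL : supp L u ^ (p-1) * supp L u = supp L u ^ p := by
      rw [← Real.rpow_add_one (hLu u hu).ne' (p-1), sub_add_cancel]
    have hzu : ⟪z, u⟫ = gu := by
      rw [hzdef, inner_add_left, real_inner_smul_left, real_inner_smul_left,
        ← hxKe, ← hxLe]
      calc s' * supp K u + t' * supp L u
          = (1/2 * (supp K u ^ (p-1) * supp K u) + 1/2 * (supp L u ^ (p-1) * supp L u))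
              / gu ^ (p-1) := by rw [hs'def, ht'def]; ring
        _ = gu ^ p / gu ^ (p-1) := by rw [eK, eL, hgup]
        _ = gu := by rw [← Real.rpow_sub hgupos, sub_sub_cancel, Real.rpow_one]
    -- z ∈ N, so its inner product with u is at most supp N u
    have hzN : z ∈ N := hNM ▸ hzM
    have hsuppN : supp N u = s * supp K u + t * supp L u := by
      rw [hNdef, supp_add (hK.1.smul s) (hK.nonempty.smul_set) (hL.1.smul t)
        (hL.nonempty.smul_set), supp_smul hK.1 hK.nonempty hs.le,
        supp_smul hL.1 hL.nonempty ht.le]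
    have hle1 : gu ≤ s * supp K u + t * supp L u := by
      rw [← hzu, ← hsuppN]
      exact le_supp hNbody.1 hzN
    -- strict Hölder gives a contradiction
    have hstrict := (holder_aux hp ha hb (hKu u hu) (hLu u hu)).2 hne
    have : s * supp K u + t * supp L u < gu := by
      rw [hdiv _ _ (hKu u hu) (hLu u hu), div_lt_iff₀ hm1, hgudef]
      calc 1/2 * a ^ (p-1) * supp K u + 1/2 * b ^ (p-1) * supp L u
          < m ^ (p-1) * (1/2 * supp K u ^ p + 1/2 * supp L u ^ p) ^ (1/p) := by
            rw [hmdef] at *; exact hstrict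
        _ = (1/2 * supp K u ^ p + 1/2 * supp L u ^ p) ^ (1/p) * m ^ (p-1) := mul_comm _ _
    linarith
  -- conclude K = (a/b) • L
  refine ⟨a / b, by positivity, ?_⟩
  apply eq_of_supp_eq hK.1 hK.2.1 hK.nonempty (hL.1.smul (a/b))
    (hL.2.1.smul (a/b)) (hL.nonempty.smul_set)
  intro u hu
  rw [supp_smul hL.1 hL.nonempty (by positivity : (0:ℝ) ≤ a/b)]
  have := hprop u hu
  field_simp
  linarith
end main

lemma supp_singleton {n : ℕ} (x0 u : EuclideanSpace ℝ (Fin n)) :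
    supp {x0} u = ⟪x0, u⟫ := by
  rw [supp, Set.image_singleton, csSup_singleton]

/-- Theorem 3.2. Let `F` be nonnegative, positively homogeneous,
increasing and concave on convex bodies, and `1 < p < ∞`. Then the following are
equivalent: (1) for all `K, L ∈ 𝒦ⁿₒ`, the function
`F_{p;K,L} : α ↦ F((1-α)·_p K +_p α·_p L)^p` is affine on `[0,1]` if and only if `K`
and `L` are dilates; (2) `F` restricted to `𝒦ⁿₒ` is strictly increasing. -/
theorem affine_iff_dilates_characterization {n : ℕ} (hn : 1 ≤ n)
    (F : Set (EuclideanSpace ℝ (Fin n)) → ℝ)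
    (hF0 : ∀ K, IsConvexBody K → 0 ≤ F K)
    (hFhom : ∀ c : ℝ, 0 < c → ∀ K, IsConvexBody K → F (c • K) = c * F K)
    (hFmono : ∀ K L, IsConvexBody K → IsConvexBody L → K ⊆ L → F K ≤ F L)
    (hFconc : ∀ K L, IsConvexBody K → IsConvexBody L → ∀ α : ℝ, α ∈ Set.Ioo (0:ℝ) 1 →
      (1 - α) * F K + α * F L ≤ F ((1 - α) • K + α • L))
    (p : ℝ) (hp : 1 < p) :
    (∀ K L, IsConvexBodyO K → IsConvexBodyO L →
      ((∀ α : ℝ, α ∈ Set.Icc (0:ℝ) 1 →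
          F (lpComb p α K L) ^ p =
            (1 - α) * F (lpComb p 0 K L) ^ p + α * F (lpComb p 1 K L) ^ p) ↔
        ∃ c : ℝ, 0 < c ∧ K = c • L)) ↔
    (∀ K L, IsConvexBodyO K → IsConvexBodyO L → K ⊂ L → F K < F L) := by
  have hp0 : (0:ℝ) < p := by linarith
  constructor
  · -- (1) → (2)
    intro Hiff K L hK hL hKL
    have hle := hFmono K L hK.body hL.body hKL.subset
    rcases lt_or_eq_of_le hle with hlt | heq
    · exact hlt
    exfalso
    -- sandwich: for nested bodies with equal F-values, F is constant along lpComb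
    have sandwich : ∀ K' L' : Set (EuclideanSpace ℝ (Fin n)),
        IsConvexBodyO K' → IsConvexBodyO L' → K' ⊆ L' → F K' = F L' →
        ∀ α : ℝ, α ∈ Set.Icc (0:ℝ) 1 → F (lpComb p α K' L') = F K' := by
      intro K' L' hK' hL' hsub' heq' α hα
      obtain ⟨hlow, hup⟩ := lpComb_sandwich hp hK' hL' hsub' hα
      have hbody := lpComb_isConvexBodyO hp hα hK' hL'
      have h1 := hFmono K' _ hK'.body hbody.body hlow
      have h2 := hFmono _ L' hbody.body hL'.body hup
      linarith
    have haffgen : ∀ K' L' : Set (EuclideanSpace ℝ (Fin n)),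
        IsConvexBodyO K' → IsConvexBodyO L' → K' ⊆ L' → F K' = F L' →
        ∀ α : ℝ, α ∈ Set.Icc (0:ℝ) 1 → F (lpComb p α K' L') ^ p =
          (1 - α) * F (lpComb p 0 K' L') ^ p + α * F (lpComb p 1 K' L') ^ p := by
      intro K' L' hK' hL' hsub' heq' α hα
      rw [sandwich K' L' hK' hL' hsub' heq' α hα,
        sandwich K' L' hK' hL' hsub' heq' 0 ⟨le_refl 0, zero_le_one⟩,
        sandwich K' L' hK' hL' hsub' heq' 1 ⟨zero_le_one, le_refl 1⟩]
      ring
    obtain ⟨c, hc, hKc⟩ := (Hiff K L hK hL).mp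
      (haffgen K L hK hL hKL.subset heq)
    have hFK : F K = c * F L := by rw [hKc, hFhom c hc L hL.body]
    by_cases hFL : F L = 0
    · -- degenerate case: build a translated dilate inside L
      obtain ⟨ρ, hρ, hball⟩ := Metric.mem_nhds_iff.mp (mem_interior_iff_mem_nhds.mp hL.2.2)
      set e : EuclideanSpace ℝ (Fin n) := EuclideanSpace.single ⟨0, hn⟩ 1 with he
      have hene : ‖e‖ = 1 := by rw [he, EuclideanSpace.norm_single, norm_one]
      set x0 : EuclideanSpace ℝ (Fin n) := (ρ/4) • e with hx0
      have hx0norm : ‖x0‖ = ρ/4 := by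
        rw [hx0, norm_smul, hene, mul_one, Real.norm_eq_abs, abs_of_pos (by positivity)]
      have h2x0 : (2:ℝ) • x0 ∈ L := by
        apply hball
        have : ‖(2:ℝ) • x0‖ = ρ/2 := by
          rw [norm_smul, hx0norm, Real.norm_eq_abs]; norm_num; ring
        simp [Metric.mem_ball, dist_zero_right, this]
        linarith
      set K2 : Set (EuclideanSpace ℝ (Fin n)) := {x0} + (1/2:ℝ) • L with hK2
      have hK2sub : K2 ⊆ L := by
        rintro w hw
        obtain ⟨a', ha', b', hb', rfl⟩ := Set.mem_add.mp hw
        rw [Set.mem_singleton_iff] at ha'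
        obtain ⟨y, hy, rfl⟩ := hb'
        subst ha'
        have hmem := hL.2.1 hy h2x0 (by norm_num : (0:ℝ) ≤ 1/2)
          (by norm_num : (0:ℝ) ≤ 1/2) (by norm_num)
        have heqpt : (1/2:ℝ) • y + (1/2:ℝ) • ((2:ℝ) • x0) = x0 + (1/2:ℝ) • y := by
          rw [smul_smul]; norm_num; abel
        rwa [heqpt] at hmem
      have hK2body : IsConvexBodyO K2 := by
        refine ⟨isCompact_singleton.add (hL.1.smul _),
          (convex_singleton x0).add (hL.2.1.smul _), ?_⟩
        have hWopen : IsOpen ({x0} + (1/2:ℝ) • Metric.ball (0:EuclideanSpace ℝ (Fin n)) ρ) :=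
          (Metric.isOpen_ball.smul₀ (by norm_num : (1/2:ℝ) ≠ 0)).add_left
        have hWsub : {x0} + (1/2:ℝ) • Metric.ball (0:EuclideanSpace ℝ (Fin n)) ρ ⊆ K2 :=
          Set.add_subset_add_left (Set.smul_set_mono hball)
        have h0W : (0:EuclideanSpace ℝ (Fin n)) ∈
            {x0} + (1/2:ℝ) • Metric.ball (0:EuclideanSpace ℝ (Fin n)) ρ := by
          refine ⟨x0, rfl, (1/2:ℝ) • (-((2:ℝ) • x0)), ⟨-((2:ℝ) • x0), ?_, rfl⟩, ?_⟩
          · have : ‖-((2:ℝ) • x0)‖ = ρ/2 := by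
              rw [norm_neg, norm_smul, hx0norm, Real.norm_eq_abs]; norm_num; ring
            simp [Metric.mem_ball, dist_zero_right, this]
            linarith
          · rw [smul_neg, smul_smul]
            norm_num
        exact interior_maximal hWsub hWopen h0W
      have hFK2 : F K2 = 0 := by
        have h1 := hFmono K2 L hK2body.body hL.body hK2sub
        have h2 := hF0 K2 hK2body.body
        rw [hFL] at h1
        linarith
      obtain ⟨c', hc', hK2c⟩ := (Hiff K2 L hK2body hL).mp
        (haffgen K2 L hK2body hL hK2sub (by rw [hFK2, hFL]))
      -- support functions
      have hsuppK2 : ∀ u : EuclideanSpace ℝ (Fin n),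
          supp K2 u = ⟪x0, u⟫ + (1/2:ℝ) * supp L u := by
        intro u
        rw [hK2, supp_add isCompact_singleton ⟨x0, rfl⟩ (hL.1.smul _)
          (hL.nonempty.smul_set), supp_singleton,
          supp_smul hL.1 hL.nonempty (by norm_num : (0:ℝ) ≤ 1/2)]
      have hsuppc' : ∀ u : EuclideanSpace ℝ (Fin n),
          supp K2 u = c' * supp L u := by
        intro u
        rw [hK2c, supp_smul hL.1 hL.nonempty hc'.le]
      obtain ⟨r, hr, hrle⟩ := exists_supp_lower hL
      have keyu : ∀ u : EuclideanSpace ℝ (Fin n), ‖u‖ = 1 →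
          ⟪x0, u⟫ + (1/2:ℝ) * supp L u = c' * supp L u := by
        intro u hu
        rw [← hsuppK2 u, hsuppc' u]
      have hc'half : c' = 1/2 := by
        have h1 := keyu e hene
        have h2 := keyu (-e) (by rw [norm_neg]; exact hene)
        rw [inner_neg_right] at h2
        have hS1 := hrle e hene
        have hS2 := hrle (-e) (by rw [norm_neg]; exact hene)
        nlinarith [h1, h2, hS1, hS2]
      have hzero := keyu e hene
      rw [hc'half] at hzero
      have : ⟪x0, e⟫ = (0:ℝ) := by linarith
      rw [hx0, real_inner_smul_left, real_inner_self_eq_norm_sq, hene] at this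
      norm_num at this
      linarith
    · have hc1 : c = 1 := by
        have h1 : c * F L = 1 * F L := by rw [one_mul, ← hFK, heq]
        exact mul_right_cancel₀ hFL h1
      exact hKL.ne (by rw [hKc, hc1, one_smul])
  · -- (2) → (1)
    intro hS K L hK hL
    constructor
    · intro Haff
      exact affine_imp_dilate F hn hF0 hFhom hFmono hFconc hS hp hK hL
        (Haff (1/2) ⟨by norm_num, by norm_num⟩)
    · rintro ⟨c, hc, rfl⟩
      intro α hα
      have key : ∀ β : ℝ, β ∈ Set.Icc (0:ℝ) 1 →
          F (lpComb p β (c • L) L) = ((1 - β) * c ^ p + β) ^ (1/p) * F L := by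
        intro β hβ
        rw [lpComb_dilate hp hL hc hβ,
          hFhom _ (Real.rpow_pos_of_pos (dilate_base_pos hc hβ hp) _) L hL.body]
      have hFL0 : 0 ≤ F L := hF0 L hL.body
      have hpow : ∀ β : ℝ, β ∈ Set.Icc (0:ℝ) 1 →
          (((1 - β) * c ^ p + β) ^ (1/p) * F L) ^ p = ((1 - β) * c ^ p + β) * F L ^ p := by
        intro β hβ
        rw [Real.mul_rpow (Real.rpow_nonneg (dilate_base_pos hc hβ hp).le _) hFL0,
          ← Real.rpow_mul (dilate_base_pos hc hβ hp).le, one_div_mul_cancel hp0.ne',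
          Real.rpow_one]
      rw [key α hα, key 0 ⟨le_refl 0, zero_le_one⟩, key 1 ⟨zero_le_one, le_refl 1⟩,
        hpow α hα, hpow 0 ⟨le_refl 0, zero_le_one⟩, hpow 1 ⟨zero_le_one, le_refl 1⟩]
      ring
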